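/- Let $x_0,\ldots,x_t$ and $\beta$ be integers, define $x_\nu := \beta + \min_{j_1+j_2=\nu-1,\ j_1,j_2\ge 0}(x_{j_1}+x_{j_2})$ for $\nu \ge t+1$, and set $\delta := \min_{0\le j\le t}(x_j+\beta)/(j+1)$ (a rational number). Then $x_\nu/\nu \to \delta$ as $\nu\to\infty$. -/

import Mathlib

theorem stmt3 (t : ℕ) (β : ℤ) (x : ℕ → ℤ)
    (hrec : ∀ ν : ℕ, ∀ _hν : t + 1 ≤ ν,
      x ν = β + (Finset.range ν).inf' (Finset.nonempty_range_iff.mpr (by omega))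
        (fun j => x j + x (ν - 1 - j))) :
    Filter.Tendsto (fun ν : ℕ => (x ν : ℝ) / ν) Filter.atTop
      (nhds ((Finset.range (t + 1)).inf' (Finset.nonempty_range_iff.mpr (by omega))
        (fun j => ((x j : ℝ) + β) / (j + 1)))) := by
  set δ : ℝ := (Finset.range (t + 1)).inf' (Finset.nonempty_range_iff.mpr (by omega))
        (fun j => ((x j : ℝ) + β) / (j + 1)) with hδdef
  -- δ * (j+1) ≤ x j + β for j ≤ t
  have hδle : ∀ j, j ≤ t → δ * (j + 1) ≤ (x j : ℝ) + β := by
    intro j hj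
    have h1 : δ ≤ ((x j : ℝ) + β) / ((j : ℝ) + 1) :=
      Finset.inf'_le _ (Finset.mem_range.mpr (by omega))
    have hpos : (0:ℝ) < (j:ℝ) + 1 := by positivity
    calc δ * ((j:ℝ)+1) ≤ (((x j:ℝ)+β)/((j:ℝ)+1)) * ((j:ℝ)+1) :=
          mul_le_mul_of_nonneg_right h1 hpos.le
      _ = (x j : ℝ) + β := div_mul_cancel₀ _ hpos.ne'
  -- lower bound for all ν
  have hlow : ∀ ν : ℕ, δ * ((ν:ℝ) + 1) ≤ (x ν : ℝ) + β := by
    intro ν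
    induction ν using Nat.strong_induction_on with
    | _ ν ih =>
      by_cases hν : ν ≤ t
      · exact hδle ν hν
      · have hν' : t + 1 ≤ ν := by omega
        have h := hrec ν hν'
        obtain ⟨j, hj, hje⟩ := Finset.exists_mem_eq_inf'
          (Finset.nonempty_range_iff.mpr (show ν ≠ 0 by omega))
          (fun j => x j + x (ν - 1 - j))
        rw [hje] at h
        have hjν : j < ν := Finset.mem_range.mp hj
        set k := ν - 1 - j with hk
        have hjk : j + k + 1 = ν := by omega
        have h1 := ih j hjν
        have h2 := ih k (by omega)
        have hcast : ((ν:ℝ) + 1) = ((j:ℝ)+1) + ((k:ℝ)+1) := by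
          have : ((j + k + 1 : ℕ) : ℝ) = (ν : ℝ) := by exact_mod_cast hjk
          push_cast at this
          linarith
        have hx : (x ν : ℝ) + β = ((x j : ℝ) + β) + ((x k : ℝ) + β) := by
          rw [h]; push_cast; ring
        rw [hx, hcast, mul_add]
        linarith
  -- subadditivity
  have hsub : ∀ a b : ℕ, t ≤ a + b → x (a + b + 1) ≤ β + x a + x b := by
    intro a b hab
    have h := hrec (a + b + 1) (by omega)
    have hmem : a ∈ Finset.range (a + b + 1) := Finset.mem_range.mpr (by omega)
    have hle : (Finset.range (a + b + 1)).inf'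
        (Finset.nonempty_range_iff.mpr (show a + b + 1 ≠ 0 by omega))
        (fun j => x j + x (a + b + 1 - 1 - j)) ≤ x a + x (a + b + 1 - 1 - a) :=
      Finset.inf'_le _ hmem
    have hb : a + b + 1 - 1 - a = b := by omega
    rw [hb] at hle
    rw [h]
    linarith
  -- minimizer
  obtain ⟨m, hm, hmδ⟩ := Finset.exists_mem_eq_inf'
    (Finset.nonempty_range_iff.mpr (show t + 1 ≠ 0 by omega))
    (fun j => ((x j : ℝ) + β) / ((j:ℝ) + 1))
  have hmt : m ≤ t := by have := Finset.mem_range.mp hm; omega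
  have hmδ2 : δ = ((x m : ℝ) + β) / ((m:ℝ) + 1) := hδdef.trans hmδ
  have hmδ' : δ * ((m:ℝ) + 1) = (x m : ℝ) + β :=
    (eq_div_iff (by positivity : ((m:ℝ)+1) ≠ 0)).mp hmδ2
  -- iterated upper bound
  have hiter : ∀ k n : ℕ, t ≤ n →
      (x (n + k * (m + 1)) : ℝ) + β ≤ ((x n : ℝ) + β) + (k : ℝ) * ((x m : ℝ) + β) := by
    intro k
    induction k with
    | zero => intro n hn; simp
    | succ k ih =>
      intro n hn
      have hidx : n + (k + 1) * (m + 1) = (n + k * (m + 1)) + m + 1 := by ring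
      rw [hidx]
      have hab : t ≤ (n + k * (m + 1)) + m :=
        le_trans hn (by linarith [Nat.zero_le (k * (m+1)), Nat.zero_le m])
      have hstep := hsub (n + k * (m + 1)) m hab
      have hstepR : (x ((n + k * (m + 1)) + m + 1) : ℝ)
          ≤ (β : ℝ) + (x (n + k * (m + 1)) : ℝ) + (x m : ℝ) := by exact_mod_cast hstep
      have := ih n hn
      push_cast
      linarith
  -- constant bound
  set C : ℝ := (Finset.Icc t (t + m)).sup'
      ⟨t, Finset.mem_Icc.mpr ⟨le_refl t, Nat.le_add_right t m⟩⟩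
      (fun n => |(x n : ℝ)| + |(β : ℝ)| + ((t:ℝ) + (m:ℝ) + 1) * |δ|) with hCdef
  have hbound : ∀ ν : ℕ, t ≤ ν → |(x ν : ℝ) - δ * ν| ≤ C := by
    intro ν hν
    have hCt : |(x t : ℝ)| + |(β : ℝ)| + ((t:ℝ) + (m:ℝ) + 1) * |δ| ≤ C :=
      Finset.le_sup' (fun n : ℕ => |(x n : ℝ)| + |(β : ℝ)| + ((t:ℝ) + (m:ℝ) + 1) * |δ|) (Finset.mem_Icc.mpr ⟨le_refl t, Nat.le_add_right t m⟩)
    rw [abs_le]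
    constructor
    · -- lower bound
      have h1 := hlow ν
      have : δ - (β:ℝ) ≤ (x ν : ℝ) - δ * ν := by nlinarith [h1]
      have h2 : -(|δ| + |(β:ℝ)|) ≤ δ - (β:ℝ) := by
        have := abs_nonneg δ
        have := neg_abs_le δ
        have := le_abs_self (β:ℝ)
        linarith
      have h3 : |δ| + |(β:ℝ)| ≤ C := by
        have h4 : (0:ℝ) ≤ |(x t : ℝ)| := abs_nonneg _
        have h5 : |δ| ≤ ((t:ℝ) + (m:ℝ) + 1) * |δ| := by
          nlinarith [abs_nonneg δ, Nat.cast_nonneg (α := ℝ) t, Nat.cast_nonneg (α := ℝ) m]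
        linarith
      linarith
    · -- upper bound
      set K := (ν - t) / (m + 1) with hK
      set R := (ν - t) % (m + 1) with hR
      have hdm : (m + 1) * K + R = ν - t := Nat.div_add_mod (ν - t) (m + 1)
      have hRlt : R < m + 1 := Nat.mod_lt _ (by omega)
      set n := t + R with hn
      have hνeq : ν = n + K * (m + 1) := by
        have hcomm : K * (m + 1) = (m + 1) * K := Nat.mul_comm _ _
        rw [hn, hcomm]
        omega
      have hnle : n ≤ t + m := by omega
      have h1 := hiter K n (by omega)
      rw [hmδ'.symm] at h1
      have hcastν : (ν : ℝ) = (n : ℝ) + (K : ℝ) * ((m:ℝ) + 1) := by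
        rw [hνeq]; push_cast; ring
      have h2 : (x ν : ℝ) - δ * ν ≤ (x n : ℝ) - δ * n := by
        rw [← hνeq] at h1
        rw [hcastν]
        nlinarith [h1]
      have h3 : (x n : ℝ) - δ * n ≤ |(x n : ℝ)| + |(β:ℝ)| + ((t:ℝ) + (m:ℝ) + 1) * |δ| := by
        have h4 : -(δ * n) ≤ |δ| * (n:ℝ) := by
          have : -δ ≤ |δ| := neg_le_abs δ
          nlinarith [Nat.cast_nonneg (α := ℝ) n]
        have h5 : (n : ℝ) ≤ (t:ℝ) + (m:ℝ) + 1 := by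
          have : (n : ℝ) ≤ ((t + m : ℕ) : ℝ) := by exact_mod_cast hnle
          push_cast at this; linarith
        have h6 : |δ| * (n:ℝ) ≤ ((t:ℝ) + (m:ℝ) + 1) * |δ| := by
          nlinarith [abs_nonneg δ]
        have h7 : (x n : ℝ) ≤ |(x n : ℝ)| := le_abs_self _
        have h8 : (0:ℝ) ≤ |(β:ℝ)| := abs_nonneg _
        linarith
      have h9 : |(x n : ℝ)| + |(β:ℝ)| + ((t:ℝ) + (m:ℝ) + 1) * |δ| ≤ C :=
        Finset.le_sup' (fun n : ℕ => |(x n : ℝ)| + |(β : ℝ)| + ((t:ℝ) + (m:ℝ) + 1) * |δ|) (Finset.mem_Icc.mpr ⟨Nat.le_add_right t R, hnle⟩)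
      linarith
  -- conclude
  have h0 : Filter.Tendsto (fun ν : ℕ => C / (ν:ℝ)) Filter.atTop (nhds 0) :=
    tendsto_const_div_atTop_nhds_zero_nat C
  have h1 : Filter.Tendsto (fun ν : ℕ => (x ν : ℝ) / ν - δ) Filter.atTop (nhds 0) := by
    apply squeeze_zero_norm' _ h0
    filter_upwards [Filter.eventually_ge_atTop (t + 1)] with ν hν
    have hνpos : (0:ℝ) < (ν:ℝ) := by
      have : 1 ≤ ν := by omega
      exact_mod_cast Nat.lt_of_lt_of_le Nat.zero_lt_one this
    have heq : (x ν : ℝ) / ν - δ = ((x ν : ℝ) - δ * ν) / ν := by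
      field_simp
    rw [Real.norm_eq_abs, heq, abs_div, abs_of_pos hνpos]
    exact (div_le_div_iff_of_pos_right hνpos).mpr (hbound ν (by omega))
  have h2 := h1.add_const δ
  simp only [sub_add_cancel, zero_add] at h2
  exact h2
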